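/- Let H be an abelian group and B a left brace. Let σ : (B,·) → Aut(H,+) be an injective group homomorphism and h : (H,+) → (B,+) a surjective group homomorphism such that h(σ(g)(m)) = λ_g(h(m)) for all g ∈ B and m ∈ H. Equip H with the left brace structure x·y := x + σ(h(x))(y). Then in this left brace λ_x = σ(h(x)) for all x ∈ H, the socle of H equals the kernel of h, and h satisfies h(x·y) = h(x)·h(y) for all x,y ∈ H, i.e. h is a homomorphism of left braces. -/

import Mathlib

/-- A left brace: an abelian group `(B,+)` and a group `(B,·)` such that
`a·(b+c)+a = a·b+a·c` for all `a b c`. -/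
class LeftBrace (B : Type*) extends AddCommGroup B, Group B where
  left_brace : ∀ a b c : B, a * (b + c) + a = a * b + a * c

lemma LeftBrace.zero_eq_one (B : Type*) [LeftBrace B] : (0 : B) = 1 := by
  have h := LeftBrace.left_brace (1 : B) 0 0
  simp only [add_zero, one_mul] at h
  have h' : (0 : B) + 1 = 0 + 0 := by simpa [add_comm] using h
  simpa using (add_left_cancel h').symm

/-- With the left brace structure `x·y := x + σ(h(x))(y)` on `H`: the lambda maps of `H`
satisfy `λ_x = σ(h(x))`, the socle of `H` equals `ker h`, and `h` is multiplicative,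
hence a homomorphism of left braces. -/
theorem lambda_socle_and_h_brace_hom (H : Type*) [AddCommGroup H] (B : Type*) [LeftBrace B]
    (σ : B →* Multiplicative (AddAut H)) (hσ : Function.Injective σ)
    (h : H →+ B) (hh : Function.Surjective h)
    (compat : ∀ (g : B) (m : H), h ((σ g).toAdd m) = g * h m - g) :
    ∀ mul : H → H → H, (∀ x y : H, mul x y = x + (σ (h x)).toAdd y) →
      (∀ x y : H, mul x y - x = (σ (h x)).toAdd y) ∧
      (∀ x : H, (∀ y : H, mul x y - x = y) ↔ h x = 0) ∧
      (∀ x y : H, h (mul x y) = h x * h y) := by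
  intro mul hmul
  have lam : ∀ x y : H, mul x y - x = (σ (h x)).toAdd y := by
    intro x y; rw [hmul]; abel
  refine ⟨lam, ?_, ?_⟩
  · intro x
    constructor
    · intro hx
      have : σ (h x) = 1 := by
        apply Multiplicative.toAdd.injective; ext y; simpa using (lam x y).symm.trans (hx y)
      have h1 : h x = 1 := hσ (by simpa using this)
      rw [h1, ← LeftBrace.zero_eq_one B]
    · intro hx y
      rw [lam, hx, LeftBrace.zero_eq_one B]
      simp
  · intro x y
    rw [hmul, map_add, compat, add_comm, sub_add_cancel]
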